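/- For every natural number n ≥ 1, let W be a freely reduced word over the alphabet {k^{±1}, a^{±1}} that contains k aⁿ k as a contiguous subword. Then every word U over the alphabet {θ1^{±1}, θ2^{±1}, a^{±1}, k^{±1}} that represents the same element of G as W satisfies |U| > n/2. -/

import Mathlib

/-- The four generators θ₁, θ₂, a, k of the free group `F` on four letters. -/
def theta1 : FreeGroup (Fin 4) := FreeGroup.of 0
def theta2 : FreeGroup (Fin 4) := FreeGroup.of 1
def aF : FreeGroup (Fin 4) := FreeGroup.of 2
def kF : FreeGroup (Fin 4) := FreeGroup.of 3

/-- The four defining relators θᵢ⁻¹aθᵢa⁻¹ and θᵢ⁻¹kθᵢa⁻¹k⁻¹, i = 1,2. -/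
def rels : Set (FreeGroup (Fin 4)) :=
  {theta1⁻¹ * aF * theta1 * aF⁻¹, theta2⁻¹ * aF * theta2 * aF⁻¹,
   theta1⁻¹ * kF * theta1 * aF⁻¹ * kF⁻¹, theta2⁻¹ * kF * theta2 * aF⁻¹ * kF⁻¹}

/-- The group `G = ⟨θ₁, θ₂, a, k ∣ aᶿⁱ = a, kᶿⁱ = ka⟩`. -/
abbrev G : Type := PresentedGroup rels

/-- The quotient map `F → G`. -/
def π : FreeGroup (Fin 4) →* G := PresentedGroup.mk rels

namespace LW

open SemidirectProduct

abbrev F2 := FreeGroup Bool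

def A : F2 := FreeGroup.of false
def K : F2 := FreeGroup.of true

def φf : F2 →* F2 := FreeGroup.lift (fun b => if b then K * A⁻¹ else A)
def φg : F2 →* F2 := FreeGroup.lift (fun b => if b then K * A else A)

lemma φgf : φg.comp φf = MonoidHom.id F2 := by
  apply FreeGroup.ext_hom
  rintro (_|_) <;>
    simp [φf, φg, A, K, FreeGroup.lift_apply_of]

lemma φfg : φf.comp φg = MonoidHom.id F2 := by
  apply FreeGroup.ext_hom
  rintro (_|_) <;>
    simp [φf, φg, A, K, FreeGroup.lift_apply_of, mul_assoc]

def φ0 : MulAut F2 := MonoidHom.toMulEquiv φf φg φgf φfg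

lemma φ0_apply (x : F2) : φ0 x = φf x := rfl
lemma φ0_inv_apply (x : F2) : φ0⁻¹ x = φg x := rfl

def θact : Multiplicative ℤ →* MulAut F2 := zpowersHom _ φ0

abbrev Q := SemidirectProduct F2 (Multiplicative ℤ) θact

lemma φf_A : φf A = A := by simp [φf, A, FreeGroup.lift_apply_of]
lemma φf_K : φf K = K * A⁻¹ := by simp [φf, A, K, FreeGroup.lift_apply_of]
lemma φg_A : φg A = A := by simp [φg, A, FreeGroup.lift_apply_of]
lemma φg_K : φg K = K * A := by simp [φg, A, K, FreeGroup.lift_apply_of]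

lemma φ0_pow_A : ∀ m : ℤ, (φ0 ^ m) A = A := by
  intro m
  induction m using Int.induction_on with
  | zero => rfl
  | succ n ih => rw [zpow_add_one, MulAut.mul_apply, φ0_apply, φf_A, ih]
  | pred n ih => rw [zpow_sub_one, MulAut.mul_apply, φ0_inv_apply, φg_A, ih]

lemma φ0_pow_K : ∀ m : ℤ, (φ0 ^ m) K = K * A ^ (-m) := by
  intro m
  induction m using Int.induction_on with
  | zero => simp
  | succ n ih =>
      rw [zpow_add_one, MulAut.mul_apply, φ0_apply, φf_K, map_mul, map_inv, ih]
      rw [show ((φ0 : MulAut F2) ^ (n:ℤ)) A = A from φ0_pow_A _]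
      group
  | pred n ih =>
      rw [zpow_sub_one, MulAut.mul_apply, φ0_inv_apply, φg_K, map_mul, ih]
      rw [show ((φ0 : MulAut F2) ^ (-n:ℤ)) A = A from φ0_pow_A _]
      group

lemma θact_apply (m : ℤ) (x : F2) : θact (Multiplicative.ofAdd m) x = (φ0 ^ m) x := rfl

def tQ : Q := inr (Multiplicative.ofAdd 1)

def fQ : Fin 4 → Q := fun i =>
  if i = 2 then inl A else if i = 3 then inl K else tQ

lemma fQ0 : fQ 0 = tQ := rfl
lemma fQ1 : fQ 1 = tQ := rfl
lemma fQ2 : fQ 2 = inl A := rfl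
lemma fQ3 : fQ 3 = inl K := rfl

lemma conj_inr (g : Multiplicative ℤ) (x : F2) :
    (inr g : Q)⁻¹ * inl x * inr g = inl ((θact g)⁻¹ x) := by
  rw [← map_inv]
  exact (inl_aut_inv (φ := θact) g x).symm

lemma θinv_A : ((θact (Multiplicative.ofAdd (1:ℤ)))⁻¹) A = A := by
  rw [← map_inv, show (Multiplicative.ofAdd (1:ℤ))⁻¹ = Multiplicative.ofAdd (-1:ℤ) from rfl,
    θact_apply, φ0_pow_A]

lemma θinv_K : ((θact (Multiplicative.ofAdd (1:ℤ)))⁻¹) K = K * A := by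
  rw [← map_inv, show (Multiplicative.ofAdd (1:ℤ))⁻¹ = Multiplicative.ofAdd (-1:ℤ) from rfl,
    θact_apply, φ0_pow_K]
  norm_num

lemma hrels : ∀ r ∈ rels, FreeGroup.lift fQ r = 1 := by
  have harel : ∀ th : FreeGroup (Fin 4), FreeGroup.lift fQ th = tQ →
      FreeGroup.lift fQ (th⁻¹ * aF * th * aF⁻¹) = 1 := by
    intro th hth
    simp only [map_mul, map_inv, hth, aF, FreeGroup.lift_apply_of, fQ2, tQ]
    rw [conj_inr, θinv_A]
    simp
  have hkrel : ∀ th : FreeGroup (Fin 4), FreeGroup.lift fQ th = tQ →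
      FreeGroup.lift fQ (th⁻¹ * kF * th * aF⁻¹ * kF⁻¹) = 1 := by
    intro th hth
    simp only [map_mul, map_inv, hth, aF, kF, FreeGroup.lift_apply_of, fQ2, fQ3, tQ]
    rw [conj_inr, θinv_K, ← map_inv, ← map_inv, mul_assoc, ← map_mul, ← map_mul]
    have : K * A * (A⁻¹ * K⁻¹) = 1 := by group
    rw [this, map_one]
  intro r hr
  rcases hr with h | h | h | h <;> subst h
  · exact harel theta1 (by simp [theta1, FreeGroup.lift_apply_of, fQ0])
  · exact harel theta2 (by simp [theta2, FreeGroup.lift_apply_of, fQ1])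
  · exact hkrel theta1 (by simp [theta1, FreeGroup.lift_apply_of, fQ0])
  · exact hkrel theta2 (by simp [theta2, FreeGroup.lift_apply_of, fQ1])

def ψ : G →* Q := PresentedGroup.toGroup hrels

lemma ψπ (x : FreeGroup (Fin 4)) : ψ (π x) = FreeGroup.lift fQ x := by
  have : ψ.comp π = FreeGroup.lift fQ := by
    apply FreeGroup.ext_hom
    intro a
    simp only [MonoidHom.comp_apply, FreeGroup.lift_apply_of]
    exact PresentedGroup.toGroup.of hrels
  exact DFunLike.congr_fun this x

end LW

namespace LW

structure Ent : Type where
  eps : Bool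
  u : ℤ
  b : ℤ
  ph : ℤ
  ub : ℤ
  sg : ℤ

structure St : Type where
  b0 : ℤ
  ph0 : ℤ
  sg0 : ℤ
  ents : List Ent
  m : ℤ

def gw (b0 : ℤ) : List Ent → F2
  | [] => A ^ b0
  | e :: es => gw b0 es * (if e.eps then K else K⁻¹) * A ^ e.b

def gword (S : St) : F2 := gw S.b0 S.ents

def elemQ (S : St) : Q := ⟨gword S, Multiplicative.ofAdd S.m⟩

def chainOk (sg0 : ℤ) : ℤ → List Ent → Prop
  | v, [] => |v| ≤ sg0
  | v, e :: es => |v - e.u| ≤ e.sg ∧ chainOk sg0 e.u es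

def m3Ok (B ph0 : ℤ) : ℤ → List Ent → Prop
  | acc, [] => ph0 + acc ≤ B
  | acc, e :: es => e.ph + e.ub + acc ≤ B ∧ m3Ok B ph0 (acc + e.sg) es

def alOk (b0 ph0 : ℤ) : ℤ → List Ent → Prop
  | rt, [] => |b0 - rt| ≤ ph0
  | rt, e :: es => |e.b + (if e.eps then e.u else 0) - rt| ≤ e.ph ∧
      alOk b0 ph0 (if e.eps then 0 else e.u) es

def junc : List Ent → Prop
  | e :: e' :: es => (e'.b = 0 → e.eps = e'.eps) ∧ junc (e' :: es)
  | _ => True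

def Inv (B : ℤ) (S : St) : Prop :=
  |S.m| ≤ B ∧ chainOk S.sg0 S.m S.ents ∧ m3Ok B S.ph0 0 S.ents ∧
    alOk S.b0 S.ph0 0 S.ents ∧ (∀ e ∈ S.ents, |e.u| ≤ e.ub) ∧ junc S.ents

lemma m3shift {B B' ph0 : ℤ} :
    ∀ {acc acc' : ℤ} {es : List Ent}, m3Ok B ph0 acc es → acc' - acc ≤ B' - B →
      m3Ok B' ph0 acc' es := by
  intro acc acc' es
  induction es generalizing acc acc' with
  | nil => intro h hs; simp only [m3Ok] at h ⊢; omega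
  | cons e es ih =>
      rintro ⟨h1, h2⟩ hs
      exact ⟨by omega, ih h2 (by omega)⟩

lemma θact_Apow (m d : ℤ) : θact (Multiplicative.ofAdd m) (A ^ d) = A ^ d := by
  rw [θact_apply, map_zpow, φ0_pow_A]

lemma θact_K' (m : ℤ) : θact (Multiplicative.ofAdd m) K = K * A ^ (-m) := by
  rw [θact_apply, φ0_pow_K]

lemma θact_Kinv (m : ℤ) : θact (Multiplicative.ofAdd m) K⁻¹ = A ^ m * K⁻¹ := by
  rw [map_inv, θact_K', mul_inv_rev, zpow_neg, inv_inv]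

lemma elem_mul_inl (S : St) (x : F2) :
    elemQ S * ⟨x, 1⟩ = ⟨gword S * θact (Multiplicative.ofAdd S.m) x, Multiplicative.ofAdd S.m⟩ := by
  rw [elemQ, SemidirectProduct.mul_def]
  congr 1
  exact mul_one _

lemma elem_mul_inr (S : St) (d : ℤ) :
    elemQ S * ⟨1, Multiplicative.ofAdd d⟩ = ⟨gword S, Multiplicative.ofAdd (S.m + d)⟩ := by
  rw [elemQ, SemidirectProduct.mul_def, map_one, mul_one]
  rfl

lemma gw_cons (b0 : ℤ) (e : Ent) (es : List Ent) :
    gw b0 (e :: es) = gw b0 es * (if e.eps then K else K⁻¹) * A ^ e.b := rfl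

/-- θ-letter step -/
lemma stepT {B : ℤ} {S : St} (h : Inv B S) {d : ℤ} (hd : |d| ≤ 1) :
    ∃ S', Inv (B + 1) S' ∧ elemQ S' = elemQ S * ⟨1, Multiplicative.ofAdd d⟩ := by
  obtain ⟨hm, hch, hm3, hal, hu, hj⟩ := h
  rw [abs_le] at hd
  rw [abs_le] at hm
  cases hE : S.ents with
  | nil =>
      rw [hE] at hch hm3 hal
      refine ⟨⟨S.b0, S.ph0, S.sg0 + 1, [], S.m + d⟩, ⟨?_, ?_, ?_, hal, ?_, trivial⟩, ?_⟩
      · show |S.m + d| ≤ B + 1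
        rw [abs_le]; omega
      · show |S.m + d| ≤ S.sg0 + 1
        simp only [chainOk, abs_le] at hch ⊢; omega
      · show S.ph0 + 0 ≤ B + 1
        simp only [m3Ok] at hm3; omega
      · intro e he; cases he
      · rw [elem_mul_inr]; simp only [elemQ, gword, hE]
  | cons e es =>
      rw [hE] at hch hm3 hal hu hj
      obtain ⟨hc1, hc2⟩ := hch
      obtain ⟨h31, h32⟩ := hm3
      refine ⟨⟨S.b0, S.ph0, S.sg0, ⟨e.eps, e.u, e.b, e.ph, e.ub, e.sg + 1⟩ :: es, S.m + d⟩,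
        ⟨?_, ⟨?_, hc2⟩, ⟨?_, ?_⟩, hal, ?_, ?_⟩, ?_⟩
      · show |S.m + d| ≤ B + 1
        rw [abs_le]; omega
      · show |S.m + d - e.u| ≤ e.sg + 1
        rw [abs_le] at hc1 ⊢; omega
      · show e.ph + e.ub + 0 ≤ B + 1
        omega
      · dsimp only
        exact m3shift h32 (by omega)
      · intro e' he'
        rcases List.mem_cons.mp he' with rfl | h'
        · exact hu e (by simp)
        · exact hu e' (List.mem_cons_of_mem _ h')
      · cases es with
        | nil => trivial
        | cons e1 es' => exact hj
      · rw [elem_mul_inr]; simp only [elemQ, gword, hE, gw_cons]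

/-- a-letter step -/
lemma stepA {B : ℤ} {S : St} (h : Inv B S) {d : ℤ} (hd : |d| ≤ 1) :
    ∃ S', Inv (B + 1) S' ∧ elemQ S' = elemQ S * ⟨A ^ d, 1⟩ := by
  obtain ⟨hm, hch, hm3, hal, hu, hj⟩ := h
  rw [abs_le] at hd hm
  have hmul : elemQ S * ⟨A ^ d, 1⟩ = ⟨gword S * A ^ d, Multiplicative.ofAdd S.m⟩ := by
    rw [elem_mul_inl, θact_Apow]
  cases hE : S.ents with
  | nil =>
      rw [hE] at hch hm3 hal
      refine ⟨⟨S.b0 + d, S.ph0 + 1, S.sg0, [], S.m⟩, ⟨?_, hch, ?_, ?_, ?_, trivial⟩, ?_⟩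
      · show |S.m| ≤ B + 1
        rw [abs_le]; omega
      · show S.ph0 + 1 + 0 ≤ B + 1
        simp only [m3Ok] at hm3; omega
      · show |S.b0 + d - 0| ≤ S.ph0 + 1
        simp only [alOk, abs_le] at hal ⊢; omega
      · intro e he; cases he
      · rw [hmul]; simp only [elemQ, gword, hE, gw]
        rw [← zpow_add]
  | cons e es =>
      rw [hE] at hch hm3 hal hu hj
      obtain ⟨h31, h32⟩ := hm3
      obtain ⟨ha1, ha2⟩ := hal
      refine ⟨⟨S.b0, S.ph0, S.sg0, ⟨e.eps, e.u, e.b + d, e.ph + 1, e.ub, e.sg⟩ :: es, S.m⟩,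
        ⟨?_, ⟨?_, hch.2⟩, ⟨?_, ?_⟩, ⟨?_, ha2⟩, ?_, ?_⟩, ?_⟩
      · show |S.m| ≤ B + 1
        rw [abs_le]; omega
      · exact hch.1
      · show e.ph + 1 + e.ub + 0 ≤ B + 1
        omega
      · dsimp only
        exact m3shift h32 (by omega)
      · show |e.b + d + (if e.eps then e.u else 0) - 0| ≤ e.ph + 1
        rw [abs_le] at ha1 ⊢
        rcases ha1 with ⟨x1, x2⟩
        constructor <;> omega
      · intro e' he'
        rcases List.mem_cons.mp he' with rfl | h'
        · exact hu e (by simp)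
        · exact hu e' (List.mem_cons_of_mem _ h')
      · cases es with
        | nil => trivial
        | cons e1 es' => exact ⟨hj.1, hj.2⟩
      · rw [hmul]; simp only [elemQ, gword, hE, gw, zpow_add, mul_assoc]

/-- k⁺-letter step -/
lemma stepKpos {B : ℤ} {S : St} (h : Inv B S) :
    ∃ S', Inv B S' ∧ elemQ S' = elemQ S * ⟨K, 1⟩ := by
  obtain ⟨hm, hch, hm3, hal, hu, hj⟩ := h
  have hmul : elemQ S * ⟨K, 1⟩ = ⟨gword S * (K * A ^ (-S.m)), Multiplicative.ofAdd S.m⟩ := by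
    rw [elem_mul_inl, θact_K']
  have habs : |S.m| ≤ B := hm
  rw [abs_le] at hm
  by_cases hc : ∃ e0 es, S.ents = e0 :: es ∧ e0.eps = false ∧ e0.b = 0
  · -- pop
    obtain ⟨e0, es, hE, heps, hb⟩ := hc
    rw [hE] at hch hm3 hal hu hj
    obtain ⟨hc1, hc2⟩ := hch
    obtain ⟨h31, h32⟩ := hm3
    obtain ⟨ha1, ha2⟩ := hal
    rw [heps] at ha2
    simp only [Bool.false_eq_true, if_false] at ha2
    cases es with
    | nil =>
        refine ⟨⟨S.b0 - S.m, S.ph0 + e0.sg, S.sg0 + e0.sg, [], S.m⟩, ⟨habs, ?_, ?_, ?_, ?_, trivial⟩, ?_⟩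
        · show |S.m| ≤ S.sg0 + e0.sg
          simp only [chainOk] at hc2
          rw [abs_le] at hc1 hc2 ⊢; omega
        · show S.ph0 + e0.sg + 0 ≤ B
          simp only [m3Ok] at h32; omega
        · show |S.b0 - S.m - 0| ≤ S.ph0 + e0.sg
          simp only [alOk] at ha2
          rw [abs_le] at ha2 hc1 ⊢; omega
        · intro e he; cases he
        · rw [hmul]
          simp only [elemQ, gword, hE, gw, heps, Bool.false_eq_true, if_false, hb]
          rw [zpow_zero, mul_one, zpow_sub]
          group
    | cons e1 es' =>
        obtain ⟨h41, h42⟩ := h32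
        obtain ⟨ha21, ha22⟩ := ha2
        refine ⟨⟨S.b0, S.ph0, S.sg0,
          ⟨e1.eps, e1.u, e1.b - S.m, e1.ph + e0.sg, e1.ub, e1.sg + e0.sg⟩ :: es', S.m⟩,
          ⟨habs, ⟨?_, hc2.2⟩, ⟨?_, ?_⟩, ⟨?_, ?_⟩, ?_, ?_⟩, ?_⟩
        · show |S.m - e1.u| ≤ e1.sg + e0.sg
          have := hc2.1
          rw [abs_le] at hc1 this ⊢; omega
        · show e1.ph + e0.sg + e1.ub + 0 ≤ B
          omega
        · dsimp only
          exact m3shift h42 (by omega)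
        · show |e1.b - S.m + (if e1.eps then e1.u else 0) - 0| ≤ e1.ph + e0.sg
          generalize ht : (if e1.eps = true then e1.u else (0:ℤ)) = t at ha21 ⊢
          rw [abs_le] at ha21 hc1 ⊢; omega
        · dsimp only
          exact ha22
        · intro e' he'
          rcases List.mem_cons.mp he' with rfl | h'
          · exact hu e1 (by simp)
          · exact hu e' (by simp [h'])
        · cases es' with
          | nil => trivial
          | cons e2 es'' => exact ⟨hj.2.1, hj.2.2⟩
        · rw [hmul]
          simp only [elemQ, gword, hE, gw, heps, Bool.false_eq_true, if_false, hb]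
          rw [zpow_zero, mul_one, zpow_sub]
          group
  · -- push
    refine ⟨⟨S.b0, S.ph0, S.sg0, ⟨true, S.m, -S.m, 0, B, 0⟩ :: S.ents, S.m⟩,
      ⟨habs, ⟨?_, ?_⟩, ⟨?_, ?_⟩, ⟨?_, ?_⟩, ?_, ?_⟩, ?_⟩
    · show |S.m - S.m| ≤ 0
      simp
    · exact hch
    · show 0 + B + 0 ≤ B
      omega
    · show m3Ok B S.ph0 (0 + 0) S.ents
      exact m3shift hm3 (by omega)
    · show |-S.m + (if true then S.m else 0) - 0| ≤ 0
      simp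
    · show alOk S.b0 S.ph0 (if true then 0 else S.m) S.ents
      simpa using hal
    · intro e' he'
      rcases List.mem_cons.mp he' with rfl | h'
      · simpa using habs
      · exact hu e' h'
    · cases hE : S.ents with
      | nil => trivial
      | cons e es =>
          rw [hE] at hj
          refine ⟨?_, hj⟩
          intro hb0
          by_contra hne
          exact hc ⟨e, es, hE, by revert hne; cases e.eps <;> simp, hb0⟩
    · rw [hmul]
      simp only [elemQ, gword, gw, if_true]
      rw [mul_assoc]

/-- k⁻-letter step -/
lemma stepKneg {B : ℤ} {S : St} (h : Inv B S) :
    ∃ S', Inv B S' ∧ elemQ S' = elemQ S * ⟨K⁻¹, 1⟩ := by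
  obtain ⟨hm, hch, hm3, hal, hu, hj⟩ := h
  have hmul : elemQ S * ⟨K⁻¹, 1⟩ = ⟨gword S * (A ^ S.m * K⁻¹), Multiplicative.ofAdd S.m⟩ := by
    rw [elem_mul_inl, θact_Kinv]
  have habs : |S.m| ≤ B := hm
  rw [abs_le] at hm
  by_cases hc : ∃ e0 es, S.ents = e0 :: es ∧ e0.eps = true ∧ e0.b + S.m = 0
  · -- pop
    obtain ⟨e0, es, hE, heps, hb⟩ := hc
    rw [hE] at hch hm3 hal hu hj
    obtain ⟨hc1, hc2⟩ := hch
    obtain ⟨h31, h32⟩ := hm3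
    obtain ⟨ha1, ha2⟩ := hal
    rw [heps] at ha2
    simp only [if_true] at ha2
    have hgrp : gword S * (A ^ S.m * K⁻¹) = gw S.b0 es := by
      simp only [gword, hE, gw, heps, if_true]
      have : A ^ e0.b * A ^ S.m = 1 := by
        rw [← zpow_add, show e0.b + S.m = 0 from hb, zpow_zero]
      calc gw S.b0 es * K * A ^ e0.b * (A ^ S.m * K⁻¹)
          = gw S.b0 es * K * (A ^ e0.b * A ^ S.m) * K⁻¹ := by group
        _ = gw S.b0 es := by rw [this]; group
    cases es with
    | nil =>
        refine ⟨⟨S.b0, S.ph0, S.sg0 + e0.sg, [], S.m⟩, ⟨habs, ?_, ?_, ?_, ?_, trivial⟩, ?_⟩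
        · show |S.m| ≤ S.sg0 + e0.sg
          simp only [chainOk] at hc2
          rw [abs_le] at hc1 hc2 ⊢; omega
        · show S.ph0 + 0 ≤ B
          simp only [m3Ok] at h32
          rw [abs_le] at hc1; omega
        · exact ha2
        · intro e he; cases he
        · rw [hmul, hgrp]; rfl
    | cons e1 es' =>
        obtain ⟨h41, h42⟩ := h32
        refine ⟨⟨S.b0, S.ph0, S.sg0,
          ⟨e1.eps, e1.u, e1.b, e1.ph, e1.ub, e1.sg + e0.sg⟩ :: es', S.m⟩,
          ⟨habs, ⟨?_, hc2.2⟩, ⟨?_, ?_⟩, ?_, ?_, ?_⟩, ?_⟩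
        · show |S.m - e1.u| ≤ e1.sg + e0.sg
          have := hc2.1
          rw [abs_le] at hc1 this ⊢; omega
        · show e1.ph + e1.ub + 0 ≤ B
          rw [abs_le] at hc1; omega
        · dsimp only
          exact m3shift h42 (by omega)
        · exact ha2
        · intro e' he'
          rcases List.mem_cons.mp he' with rfl | h'
          · exact hu e1 (by simp)
          · exact hu e' (by simp [h'])
        · cases es' with
          | nil => trivial
          | cons e2 es'' => exact ⟨hj.2.1, hj.2.2⟩
        · rw [hmul, hgrp]
          simp only [elemQ, gword, gw]
  · -- push
    cases hE : S.ents with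
    | nil =>
        rw [hE] at hch hm3 hal
        refine ⟨⟨S.b0 + S.m, S.ph0, S.sg0, [⟨false, S.m, 0, 0, B, 0⟩], S.m⟩,
          ⟨habs, ⟨?_, ?_⟩, ⟨?_, ?_⟩, ⟨?_, ?_⟩, ?_, trivial⟩, ?_⟩
        · show |S.m - S.m| ≤ 0
          simp
        · exact hch
        · show 0 + B + 0 ≤ B
          omega
        · show S.ph0 + (0 + 0) ≤ B
          simp only [m3Ok] at hm3; omega
        · show |(0:ℤ) + (if false then S.m else 0) - 0| ≤ 0
          simp
        · show |S.b0 + S.m - (if false then 0 else S.m)| ≤ S.ph0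
          simp only [alOk] at hal
          rw [abs_le] at hal ⊢
          simp only [Bool.false_eq_true, if_false]
          omega
        · intro e' he'
          rcases List.mem_cons.mp he' with rfl | h'
          · simpa using habs
          · cases h'
        · rw [hmul]
          simp only [elemQ, gword, hE, gw, Bool.false_eq_true, if_false]
          rw [zpow_add]
          group
    | cons e es =>
        rw [hE] at hch hm3 hal hu hj
        obtain ⟨h31, h32⟩ := hm3
        obtain ⟨ha1, ha2⟩ := hal
        have hcond : ¬(e.eps = true ∧ e.b + S.m = 0) := fun hx => hc ⟨e, es, hE, hx.1, hx.2⟩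
        refine ⟨⟨S.b0, S.ph0, S.sg0,
          ⟨false, S.m, 0, 0, B, 0⟩ :: ⟨e.eps, e.u, e.b + S.m, e.ph, e.ub, e.sg⟩ :: es, S.m⟩,
          ⟨habs, ⟨?_, ?_, hch.2⟩, ⟨?_, ?_, ?_⟩, ⟨?_, ?_, ?_⟩, ?_, ⟨?_, ?_⟩⟩, ?_⟩
        · show |S.m - S.m| ≤ 0
          simp
        · show |S.m - e.u| ≤ e.sg
          exact hch.1
        · show 0 + B + 0 ≤ B
          omega
        · show e.ph + e.ub + (0 + 0) ≤ B
          omega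
        · dsimp only
          exact m3shift h32 (by omega)
        · show |(0:ℤ) + (if false then S.m else 0) - 0| ≤ 0
          simp
        · show |e.b + S.m + (if e.eps then e.u else 0) - (if false then 0 else S.m)| ≤ e.ph
          generalize ht : (if e.eps = true then e.u else (0:ℤ)) = t at ha1 ⊢
          simp only [Bool.false_eq_true, if_false]
          rw [abs_le] at ha1 ⊢; omega
        · dsimp only
          exact ha2
        · intro e' he'
          rcases List.mem_cons.mp he' with rfl | h'
          · simpa using habs
          · rcases List.mem_cons.mp h' with rfl | h''
            · exact hu e (by simp)
            · exact hu e' (by simp [h''])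
        · show e.b + S.m = 0 → false = e.eps
          intro hb0
          cases hcase : e.eps with
          | false => rfl
          | true => exact absurd ⟨hcase, hb0⟩ hcond
        · show junc (⟨e.eps, e.u, e.b + S.m, e.ph, e.ub, e.sg⟩ :: es)
          cases es with
          | nil => trivial
          | cons e2 es'' => exact ⟨hj.1, hj.2⟩
        · rw [hmul]
          simp only [elemQ, gword, hE, gw, Bool.false_eq_true, if_false]
          rw [zpow_add]
          group

def Bcount (U : List (Fin 4 × Bool)) : ℤ := ((U.filter fun p => p.1 ≠ 3).length : ℤ)

lemma Bcount_append (U : List (Fin 4 × Bool)) (x : Fin 4 × Bool) :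
    Bcount (U ++ [x]) = Bcount U + (if x.1 = 3 then 0 else 1) := by
  simp only [Bcount, List.filter_append]
  by_cases hx : x.1 = 3
  · simp [hx]
  · simp [hx]

lemma Bcount_nonneg (U : List (Fin 4 × Bool)) : 0 ≤ Bcount U := by
  simp [Bcount]

lemma Bcount_le (U : List (Fin 4 × Bool)) : Bcount U ≤ (U.length : ℤ) := by
  simp only [Bcount]
  exact_mod_cast List.length_filter_le _ _

lemma lift_single_true (i : Fin 4) :
    FreeGroup.lift fQ (FreeGroup.mk [(i, true)]) = fQ i := FreeGroup.lift_apply_of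

lemma lift_single_false (i : Fin 4) :
    FreeGroup.lift fQ (FreeGroup.mk [(i, false)]) = (fQ i)⁻¹ := by
  have : FreeGroup.mk [(i, false)] = (FreeGroup.of i)⁻¹ := by
    rw [show FreeGroup.of i = FreeGroup.mk [(i, true)] from rfl, FreeGroup.inv_mk]
    rfl
  rw [this, map_inv, FreeGroup.lift_apply_of]

lemma fQinv_t (i : Fin 4) (hi : fQ i = tQ) : (fQ i)⁻¹ = (⟨1, Multiplicative.ofAdd (-1 : ℤ)⟩ : Q) := by
  rw [hi, tQ, ← map_inv]
  rfl

lemma inlA_eq : (SemidirectProduct.inl A : Q) = ⟨A ^ (1:ℤ), 1⟩ := by rw [zpow_one]; rfl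
lemma inlAinv_eq : (SemidirectProduct.inl A : Q)⁻¹ = ⟨A ^ (-1:ℤ), 1⟩ := by
  rw [← map_inv, zpow_neg_one]; rfl
lemma inlK_eq : (SemidirectProduct.inl K : Q) = ⟨K, 1⟩ := rfl
lemma inlKinv_eq : (SemidirectProduct.inl K : Q)⁻¹ = ⟨K⁻¹, 1⟩ := by
  rw [← map_inv]; rfl

lemma build (U : List (Fin 4 × Bool)) :
    ∃ S, Inv (Bcount U) S ∧ elemQ S = FreeGroup.lift fQ (FreeGroup.mk U) := by
  induction U using List.reverseRecOn with
  | nil =>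
      refine ⟨⟨0, 0, 0, [], 0⟩, ⟨?_, ?_, ?_, ?_, ?_, trivial⟩, ?_⟩
      · show |(0:ℤ)| ≤ Bcount []
        simp [Bcount]
      · show |(0:ℤ)| ≤ (0:ℤ)
        simp
      · show (0:ℤ) + 0 ≤ Bcount []
        simp [Bcount]
      · show |(0:ℤ) - 0| ≤ (0:ℤ)
        simp
      · intro e he; cases he
      · show (⟨gw 0 [], Multiplicative.ofAdd 0⟩ : Q) = _
        rw [show FreeGroup.mk ([] : List (Fin 4 × Bool)) = 1 from (FreeGroup.one_eq_mk).symm,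
          map_one]
        show (⟨A ^ (0:ℤ), Multiplicative.ofAdd 0⟩ : Q) = 1
        rw [zpow_zero]
        rfl
  | append_singleton U x ih =>
      obtain ⟨S, hI, hel⟩ := ih
      have hmk : FreeGroup.lift fQ (FreeGroup.mk (U ++ [x])) =
          FreeGroup.lift fQ (FreeGroup.mk U) * FreeGroup.lift fQ (FreeGroup.mk [x]) := by
        rw [← FreeGroup.mul_mk, map_mul]
      rw [Bcount_append]
      obtain ⟨i, s⟩ := x
      by_cases hi2 : i = 2
      · subst hi2
        simp only [show ((2:Fin 4) = 3) = False by simp, if_false]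
        cases s
        · obtain ⟨S', hI', hel'⟩ := stepA hI (d := -1) (by norm_num)
          refine ⟨S', hI', ?_⟩
          rw [hmk, hel', hel, lift_single_false, show fQ 2 = SemidirectProduct.inl A from rfl,
            inlAinv_eq]
        · obtain ⟨S', hI', hel'⟩ := stepA hI (d := 1) (by norm_num)
          refine ⟨S', hI', ?_⟩
          rw [hmk, hel', hel, lift_single_true, show fQ 2 = SemidirectProduct.inl A from rfl,
            inlA_eq]
      · by_cases hi3 : i = 3
        · subst hi3
          simp only [if_true]
          cases s
          · obtain ⟨S', hI', hel'⟩ := stepKneg hI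
            refine ⟨S', by simpa using hI', ?_⟩
            rw [hmk, hel', hel, lift_single_false, show fQ 3 = SemidirectProduct.inl K from rfl,
              inlKinv_eq]
          · obtain ⟨S', hI', hel'⟩ := stepKpos hI
            refine ⟨S', by simpa using hI', ?_⟩
            rw [hmk, hel', hel, lift_single_true, show fQ 3 = SemidirectProduct.inl K from rfl,
              inlK_eq]
        · have hQ : fQ i = tQ := by simp [fQ, hi2, hi3]
          simp only [hi3, if_false]
          cases s
          · obtain ⟨S', hI', hel'⟩ := stepT hI (d := -1) (by norm_num)
            refine ⟨S', hI', ?_⟩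
            rw [hmk, hel', hel, lift_single_false, fQinv_t _ hQ]
          · obtain ⟨S', hI', hel'⟩ := stepT hI (d := 1) (by norm_num)
            refine ⟨S', hI', ?_⟩
            rw [hmk, hel', hel, lift_single_true, hQ]
            rfl

/-! lists: ablock, flat -/

def ablock (z : ℤ) : List (Bool × Bool) :=
  if 0 ≤ z then List.replicate z.toNat (false, true) else List.replicate (-z).toNat (false, false)

def flat (b0 : ℤ) : List Ent → List (Bool × Bool)
  | [] => ablock b0
  | e :: es => flat b0 es ++ (true, e.eps) :: ablock e.b

lemma mk_replicate_pos {α : Type*} (x : α) :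
    ∀ n : ℕ, FreeGroup.mk (List.replicate n (x, true)) = (FreeGroup.of x) ^ n := by
  intro n
  induction n with
  | zero => rw [pow_zero]; exact (FreeGroup.one_eq_mk).symm
  | succ n ih =>
      rw [List.replicate_succ, show ((x, true) :: List.replicate n (x, true)) =
        [(x, true)] ++ List.replicate n (x, true) from rfl, ← FreeGroup.mul_mk, ih, pow_succ']
      rfl

lemma mk_replicate_neg {α : Type*} (x : α) :
    ∀ n : ℕ, FreeGroup.mk (List.replicate n (x, false)) = (FreeGroup.of x) ^ (-(n:ℤ)) := by
  intro n
  induction n with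
  | zero => simp; exact (FreeGroup.one_eq_mk).symm
  | succ n ih =>
      rw [List.replicate_succ, show ((x, false) :: List.replicate n (x, false)) =
        [(x, false)] ++ List.replicate n (x, false) from rfl, ← FreeGroup.mul_mk, ih]
      have hsing : FreeGroup.mk [(x, false)] = (FreeGroup.of x)⁻¹ := by
        rw [show FreeGroup.of x = FreeGroup.mk [(x, true)] from rfl, FreeGroup.inv_mk]
        rfl
      rw [hsing]
      rw [show (-(↑(n+1):ℤ)) = (-1) + (-(n:ℤ)) by push_cast; ring, zpow_add, zpow_neg_one]

lemma mk_ablock (z : ℤ) : FreeGroup.mk (ablock z) = A ^ z := by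
  by_cases hz : 0 ≤ z
  · rw [ablock, if_pos hz, mk_replicate_pos, ← zpow_natCast, Int.toNat_of_nonneg hz]; rfl
  · rw [ablock, if_neg hz, mk_replicate_neg]
    congr 1
    omega

lemma mk_flat (b0 : ℤ) : ∀ es : List Ent, FreeGroup.mk (flat b0 es) = gw b0 es := by
  intro es
  induction es with
  | nil => exact mk_ablock b0
  | cons e es ih =>
      rw [flat, ← FreeGroup.mul_mk, ih, gw,
        show ((true, e.eps) :: ablock e.b) = [(true, e.eps)] ++ ablock e.b from rfl,
        ← FreeGroup.mul_mk, mk_ablock, ← mul_assoc]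
      congr 2
      cases hc : e.eps
      · show FreeGroup.mk [(true, false)] = K⁻¹
        rw [show K = FreeGroup.mk [(true, true)] from rfl, FreeGroup.inv_mk]
        rfl
      · rfl

/-! reducedness -/

def RR {α : Type*} (x y : α × Bool) : Prop := x.1 = y.1 → y.2 = x.2

lemma chain'_reduce_self {α : Type*} [DecidableEq α] :
    ∀ L : List (α × Bool), L.Chain' RR → FreeGroup.reduce L = L := by
  intro L h
  induction L with
  | nil => rfl
  | cons x L ih =>
      have hL : FreeGroup.reduce L = L := ih (List.IsChain.tail h)
      rw [FreeGroup.reduce.cons, hL]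
      cases L with
      | nil => rfl
      | cons y ys =>
          have hxy : RR x y := (List.isChain_cons_cons.mp h).1
          dsimp only
          rw [if_neg]
          rintro ⟨h1, h2⟩
          have := hxy h1
          rw [this] at h2
          simp at h2
  
lemma not_chain'_split {α : Type*} :
    ∀ L : List (α × Bool), ¬ L.Chain' RR → ∃ (L₁ : List (α × Bool)) (x : α) (b : Bool)
      (L₂ : List (α × Bool)), L = L₁ ++ (x, b) :: (x, !b) :: L₂ := by
  intro L
  induction L with
  | nil => intro h; exact absurd List.isChain_nil h
  | cons x L ih =>
      intro h
      cases L with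
      | nil => exact absurd (List.isChain_singleton x) h
      | cons y ys =>
          by_cases hxy : RR x y
          · have : ¬ (y :: ys).Chain' RR := fun hc => h (List.isChain_cons_cons.mpr ⟨hxy, hc⟩)
            obtain ⟨L₁, z, b, L₂, hsplit⟩ := ih this
            exact ⟨x :: L₁, z, b, L₂, by rw [hsplit]; rfl⟩
          · rw [RR] at hxy
            push_neg at hxy
            obtain ⟨h1, h2⟩ := hxy
            refine ⟨[], x.1, x.2, ys, ?_⟩
            have hy : y = (x.1, !x.2) := by
              have h3 : y.2 = !x.2 := by
                cases hy2 : y.2 <;> cases hx2 : x.2 <;> simp_all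
              rw [Prod.ext_iff]
              exact ⟨h1.symm, h3⟩
            rw [← hy]
            rfl
  
lemma chain'_of_reduce_self {α : Type*} [DecidableEq α] (L : List (α × Bool))
    (h : FreeGroup.reduce L = L) : L.Chain' RR := by
  by_contra hc
  obtain ⟨L₁, x, b, L₂, hsplit⟩ := not_chain'_split L hc
  exact FreeGroup.reduce.not (by rw [h, hsplit])

lemma ablock_mem {z : ℤ} {x : Bool × Bool} (hx : x ∈ ablock z) : x.1 = false := by
  rw [ablock] at hx
  split at hx <;> rw [List.mem_replicate] at hx <;> rw [hx.2]

lemma chain'_replicate' {a : Bool × Bool} (ha : RR a a) : ∀ n, List.Chain' RR (List.replicate n a) := by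
  intro n
  induction n with
  | zero => exact List.isChain_nil
  | succ n ih =>
      rw [List.replicate_succ]
      rw [List.Chain', List.isChain_cons]
      refine ⟨?_, ih⟩
      intro y hy
      have := List.mem_of_mem_head? hy
      rw [List.mem_replicate] at this
      rw [this.2]
      exact ha

lemma chain'_ablock (z : ℤ) : List.Chain' RR (ablock z) := by
  rw [ablock]
  split <;> exact chain'_replicate' (fun _ => rfl) _

lemma flat_chain : ∀ (es : List Ent) (b0 : ℤ), junc es → List.Chain' RR (flat b0 es) := by
  intro es
  induction es with
  | nil => intro b0 _; exact chain'_ablock b0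
  | cons e es ih =>
      intro b0 hj
      rw [flat, List.Chain', List.isChain_append]
      have hjtail : junc es := by
        cases es with
        | nil => trivial
        | cons e1 es1 => exact hj.2
      refine ⟨ih b0 hjtail, ?_, ?_⟩
      · rw [List.isChain_cons]
        refine ⟨?_, chain'_ablock _⟩
        intro y hy
        have := ablock_mem (List.mem_of_mem_head? hy)
        intro habs
        rw [this] at habs
        cases habs
      · intro x hx y hy
        have hy' : y = (true, e.eps) := by
          simp only [List.head?_cons, Option.mem_def, Option.some_inj] at hy
          exact hy.symm
        subst hy'
        cases es with
        | nil =>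
            have := ablock_mem (List.mem_of_mem_getLast? hx)
            intro habs
            rw [this] at habs
            cases habs
        | cons e1 es1 =>
            rw [flat, List.getLast?_append] at hx
            cases hab : ablock e1.b with
            | nil =>
                rw [hab] at hx
                have hx' : x = (true, e1.eps) := by
                  simp only [List.getLast?_singleton] at hx
                  exact (by simpa using hx : (true, e1.eps) = x).symm
                subst hx'
                intro _
                show e.eps = e1.eps
                apply hj.1
                rw [ablock] at hab
                split at hab <;> rw [List.replicate_eq_nil_iff] at hab <;> omega
            | cons a l =>
                rw [hab, List.getLast?_cons_cons] at hx
                obtain ⟨w, hw⟩ := Option.isSome_iff_exists.mp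
                  (List.getLast?_isSome.mpr (List.cons_ne_nil a l))
                rw [hw] at hx
                have hx' : x = w := (by simpa using hx : w = x).symm
                have hwmem : w ∈ ablock e1.b := by
                  rw [hab]
                  exact List.mem_of_mem_getLast? (by rw [hw]; rfl)
                have hxf : x.1 = false := by rw [hx']; exact ablock_mem hwmem
                intro habs
                rw [hxf] at habs
                cases habs

lemma ablock_eq_repl {b : ℤ} {n : ℕ} (hn : 1 ≤ n)
    (h : ablock b = List.replicate n ((false, true) : Bool × Bool)) : b = n := by
  rw [ablock] at h
  split at h
  · have := congrArg List.length h
    simp only [List.length_replicate] at this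
    omega
  · exfalso
    have hmem : ((false, false) : Bool × Bool) ∈ List.replicate (-b).toNat ((false, false) : Bool × Bool) := by
      rw [List.mem_replicate]
      exact ⟨by omega, rfl⟩
    rw [h, List.mem_replicate] at hmem
    simp at hmem

lemma tailrun {n : ℕ} (hn : 1 ≤ n) :
    ∀ (es : List Ent) (b0 : ℤ) (q : List (Bool × Bool)) (c : Bool),
    flat b0 es = q ++ (true, c) :: List.replicate n ((false, true) : Bool × Bool) →
    ∃ e es', es = e :: es' ∧ e.eps = c ∧ e.b = n := by
  intro es b0 q c h
  cases es with
  | nil =>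
      exfalso
      have hmem : ((true, c) : Bool × Bool) ∈ ablock b0 := by
        rw [show ablock b0 = flat b0 [] from rfl, h]
        simp
      have := ablock_mem hmem
      simp at this
  | cons e es' =>
      rw [flat] at h
      rcases List.append_eq_append_iff.mp h with ⟨a', _, ha2⟩ | ⟨c', _, hc2⟩
      · cases a' with
        | nil =>
            simp only [List.nil_append] at ha2
            injection ha2 with h1 h2
            have heps : e.eps = c := by simpa using congrArg Prod.snd h1
            exact ⟨e, es', rfl, heps, ablock_eq_repl hn h2⟩
        | cons y a'' =>
            exfalso
            injection ha2 with h1 h2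
            have hmem : ((true, c) : Bool × Bool) ∈ ablock e.b := by
              rw [h2]
              simp
            have := ablock_mem hmem
            simp at this
      · cases c' with
        | nil =>
            simp only [List.nil_append] at hc2
            injection hc2 with h1 h2
            have heps : e.eps = c := by simpa using (congrArg Prod.snd h1).symm
            exact ⟨e, es', rfl, heps, ablock_eq_repl hn h2.symm⟩
        | cons y c'' =>
            exfalso
            injection hc2 with h1 h2
            have hmem : ((true, e.eps) : Bool × Bool) ∈ List.replicate n ((false, true) : Bool × Bool) := by
              rw [h2]
              simp
            rw [List.mem_replicate] at hmem
            simp at hmem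

lemma parse {n : ℕ} (hn : 1 ≤ n) :
    ∀ (es : List Ent) (b0 : ℤ) (p s : List (Bool × Bool)),
    flat b0 es = p ++ (true, true) ::
      (List.replicate n ((false, true) : Bool × Bool) ++ (true, true) :: s) →
    ∃ l1 etop e l2, es = l1 ++ etop :: e :: l2 ∧ etop.eps = true ∧ e.eps = true ∧
      e.b = (n : ℤ) := by
  intro es
  induction es with
  | nil =>
      intro b0 p s h
      exfalso
      have hmem : ((true, true) : Bool × Bool) ∈ ablock b0 := by
        rw [show ablock b0 = flat b0 [] from rfl, h]
        simp
      have := ablock_mem hmem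
      simp at this
  | cons e0 es ih =>
      intro b0 p s h
      rw [flat] at h
      rw [show p ++ (true, true) ::
          (List.replicate n ((false, true) : Bool × Bool) ++ (true, true) :: s) =
          (p ++ (true, true) :: List.replicate n ((false, true) : Bool × Bool)) ++
            ((true, true) :: s) by simp] at h
      rcases List.append_eq_append_iff.mp h with ⟨a', ha1, ha2⟩ | ⟨c', hc1, hc2⟩
      · cases a' with
        | nil =>
            rw [List.append_nil] at ha1
            injection ha2 with h1 h2
            have heps0 : e0.eps = true := by simpa using congrArg Prod.snd h1
            obtain ⟨e, es', hsplit, heps, hb⟩ := tailrun hn es b0 p true ha1.symm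
            exact ⟨[], e0, e, es', by rw [hsplit]; rfl, heps0, heps, hb⟩
        | cons y a'' =>
            exfalso
            injection ha2 with h1 h2
            have hmem : ((true, true) : Bool × Bool) ∈ ablock e0.b := by
              rw [h2]
              simp
            have := ablock_mem hmem
            simp at this
      · cases c' with
        | nil =>
            rw [List.append_nil] at hc1
            simp only [List.nil_append] at hc2
            injection hc2 with h1 h2
            have heps0 : e0.eps = true := by
              simpa using (congrArg Prod.snd h1).symm
            obtain ⟨e, es', hsplit, heps, hb⟩ := tailrun hn es b0 p true hc1
            exact ⟨[], e0, e, es', by rw [hsplit]; rfl, heps0, heps, hb⟩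
        | cons y c'' =>
            injection hc2 with h1 h2
            obtain ⟨l1, etop, e, l2, hsplit, hx1, hx2, hx3⟩ := ih b0 p c'' (by rw [hc1, ← h1]; simp)
            exact ⟨e0 :: l1, etop, e, l2, by rw [hsplit]; rfl, hx1, hx2, hx3⟩

lemma al_extract : ∀ (l1 : List Ent) (rt : ℤ) {b0 ph0 : ℤ} {etop e : Ent} {l2 : List Ent},
    alOk b0 ph0 rt (l1 ++ etop :: e :: l2) → etop.eps = true →
    |e.b + (if e.eps then e.u else 0) - 0| ≤ e.ph := by
  intro l1
  induction l1 with
  | nil =>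
      intro rt b0 ph0 etop e l2 h htop
      obtain ⟨h1, h2⟩ := h
      rw [htop] at h2
      simp only [if_true] at h2
      exact h2.1
  | cons x l1 ih =>
      intro rt b0 ph0 etop e l2 h htop
      obtain ⟨h1, h2⟩ := h
      exact ih _ h2 htop

lemma chain_sg_nonneg : ∀ {es : List Ent} {sg0 v : ℤ}, chainOk sg0 v es → ∀ e ∈ es, 0 ≤ e.sg := by
  intro es
  induction es with
  | nil => intro _ _ _ e he; cases he
  | cons x es ih =>
      intro sg0 v h e he
      obtain ⟨h1, h2⟩ := h
      rcases List.mem_cons.mp he with rfl | h'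
      · exact le_trans (abs_nonneg _) h1
      · exact ih h2 e h'

lemma m3_extract : ∀ (l1 : List Ent) (acc : ℤ) {B ph0 : ℤ} {etop e : Ent} {l2 : List Ent},
    m3Ok B ph0 acc (l1 ++ etop :: e :: l2) → 0 ≤ acc →
    (∀ x ∈ l1 ++ etop :: e :: l2, 0 ≤ x.sg) → e.ph + e.ub ≤ B := by
  intro l1
  induction l1 with
  | nil =>
      intro acc B ph0 etop e l2 h hacc hsg
      obtain ⟨h1, h2, h3⟩ := h
      have h4 : 0 ≤ etop.sg := hsg etop (by simp)
      omega
  | cons x l1 ih =>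
      intro acc B ph0 etop e l2 h hacc hsg
      obtain ⟨h1, h2⟩ := h
      refine ih (acc + x.sg) h2 ?_ ?_
      · have : 0 ≤ x.sg := hsg x (by simp)
        omega
      · intro z hz
        exact hsg z (by simp [hz])

def τ : Fin 4 × Bool → Bool × Bool := fun p => (decide (p.1 = 3), p.2)

lemma τ2 (s : Bool) : τ (2, s) = (false, s) := by simp [τ]
lemma τ3 (s : Bool) : τ (3, s) = (true, s) := by simp [τ]

lemma pairmul (a b : F2) : (⟨a, 1⟩ : Q) * ⟨b, 1⟩ = ⟨a * b, 1⟩ := by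
  rw [SemidirectProduct.mul_def]
  simp

lemma A_mul_mk (L : List (Bool × Bool)) :
    A * FreeGroup.mk L = FreeGroup.mk ((false, true) :: L) := by
  rw [show A = FreeGroup.mk [(false, true)] from rfl, FreeGroup.mul_mk]
  rfl

lemma Ainv_mul_mk (L : List (Bool × Bool)) :
    A⁻¹ * FreeGroup.mk L = FreeGroup.mk ((false, false) :: L) := by
  rw [show A = FreeGroup.mk [(false, true)] from rfl, FreeGroup.inv_mk, FreeGroup.mul_mk]
  rfl

lemma K_mul_mk (L : List (Bool × Bool)) :
    K * FreeGroup.mk L = FreeGroup.mk ((true, true) :: L) := by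
  rw [show K = FreeGroup.mk [(true, true)] from rfl, FreeGroup.mul_mk]
  rfl

lemma Kinv_mul_mk (L : List (Bool × Bool)) :
    K⁻¹ * FreeGroup.mk L = FreeGroup.mk ((true, false) :: L) := by
  rw [show K = FreeGroup.mk [(true, true)] from rfl, FreeGroup.inv_mk, FreeGroup.mul_mk]
  rfl

lemma evalW : ∀ W : List (Fin 4 × Bool), (∀ x ∈ W, x.1 = 2 ∨ x.1 = 3) →
    FreeGroup.lift fQ (FreeGroup.mk W) = ⟨FreeGroup.mk (W.map τ), 1⟩ := by
  intro W
  induction W with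
  | nil =>
      intro _
      rw [show FreeGroup.mk ([] : List (Fin 4 × Bool)) = 1 from FreeGroup.one_eq_mk.symm, map_one]
      rw [List.map_nil, show FreeGroup.mk ([] : List (Bool × Bool)) = 1 from FreeGroup.one_eq_mk.symm]
      rfl
  | cons x W ih =>
      intro hal
      have hx := hal x (by simp)
      have hW : ∀ y ∈ W, y.1 = 2 ∨ y.1 = 3 := fun y hy => hal y (List.mem_cons_of_mem _ hy)
      rw [show (x :: W) = [x] ++ W from rfl, ← FreeGroup.mul_mk, map_mul, ih hW]
      obtain ⟨i, s⟩ := x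
      simp only at hx
      rcases hx with hi | hi <;> subst hi <;> cases s
      · rw [lift_single_false, show fQ 2 = SemidirectProduct.inl A from rfl, inlAinv_eq,
          pairmul, show ((-1:ℤ)) = -1 from rfl, zpow_neg_one, Ainv_mul_mk]
        simp [τ2]
      · rw [lift_single_true, show fQ 2 = SemidirectProduct.inl A from rfl, inlA_eq,
          pairmul, zpow_one, A_mul_mk]
        simp [τ2]
      · rw [lift_single_false, show fQ 3 = SemidirectProduct.inl K from rfl, inlKinv_eq,
          pairmul, Kinv_mul_mk]
        simp [τ3]
      · rw [lift_single_true, show fQ 3 = SemidirectProduct.inl K from rfl, inlK_eq,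
          pairmul, K_mul_mk]
        simp [τ3]

lemma chain_map_tau : ∀ W : List (Fin 4 × Bool), (∀ x ∈ W, x.1 = 2 ∨ x.1 = 3) →
    W.Chain' RR → (W.map τ).Chain' RR := by
  intro W
  induction W with
  | nil => intro _ _; simp [List.Chain']
  | cons x W ih =>
      intro hal h
      cases W with
      | nil => exact List.isChain_singleton _
      | cons y W' =>
          rw [List.map_cons, List.map_cons, List.Chain', List.isChain_cons_cons]
          obtain ⟨hxy, htail⟩ := List.isChain_cons_cons.mp h
          constructor
          · intro h1
            show (τ y).2 = (τ x).2
            have hx2 := hal x (by simp)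
            have hy2 := hal y (by simp)
            have hxy1 : x.1 = y.1 := by
              rcases hx2 with h2 | h3 <;> rcases hy2 with h2' | h3'
              · rw [h2, h2']
              · exfalso; rw [τ, τ, h2, h3'] at h1; simp at h1
              · exfalso; rw [τ, τ, h3, h2'] at h1; simp at h1
              · rw [h3, h3']
            exact hxy hxy1
          · rw [← List.map_cons]
            exact ih (fun z hz => hal z (List.mem_cons_of_mem _ hz)) htail

end LW

/-- If `W` is a freely reduced word over `{k^{±1}, a^{±1}}` (letters `2 = a`, `3 = k`,
with `true` marking a positive letter) that contains `k aⁿ k` as a contiguous subword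
(`n ≥ 1`), then every word `U` over the full alphabet representing the same element of
`G` satisfies `|U| > n/2`. -/
theorem long_words (n : ℕ) (hn : 1 ≤ n) (W : List (Fin 4 × Bool))
    (hred : FreeGroup.reduce W = W)
    (halph : ∀ x ∈ W, x.1 = 2 ∨ x.1 = 3)
    (hsub : ∃ p s : List (Fin 4 × Bool),
      W = p ++ (((3 : Fin 4), true) :: (List.replicate n ((2 : Fin 4), true) ++
        [((3 : Fin 4), true)])) ++ s) :
    ∀ U : List (Fin 4 × Bool),
      π (FreeGroup.mk U) = π (FreeGroup.mk W) → (n : ℝ) / 2 < (U.length : ℝ) := by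
  intro U hU
  obtain ⟨p, s, hW⟩ := hsub
  have hQeq : FreeGroup.lift LW.fQ (FreeGroup.mk U) = FreeGroup.lift LW.fQ (FreeGroup.mk W) := by
    have := congrArg LW.ψ hU
    rwa [LW.ψπ, LW.ψπ] at this
  obtain ⟨S, hI, hel⟩ := LW.build U
  have hSW : LW.elemQ S = ⟨FreeGroup.mk (W.map LW.τ), 1⟩ := by
    rw [hel, hQeq, LW.evalW W halph]
  have hleft : LW.gw S.b0 S.ents = FreeGroup.mk (W.map LW.τ) := congrArg SemidirectProduct.left hSW
  obtain ⟨hm, hch, hm3, hal, hu, hj⟩ := hI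
  have hmfl : FreeGroup.mk (LW.flat S.b0 S.ents) = FreeGroup.mk (W.map LW.τ) := by
    rw [LW.mk_flat]; exact hleft
  have hflat : LW.flat S.b0 S.ents = W.map LW.τ := by
    have h1 := congrArg FreeGroup.toWord hmfl
    rw [FreeGroup.toWord_mk, FreeGroup.toWord_mk,
      LW.chain'_reduce_self _ (LW.flat_chain S.ents S.b0 hj),
      LW.chain'_reduce_self _ (LW.chain_map_tau W halph (LW.chain'_of_reduce_self W hred))] at h1
    exact h1
  have hpat : LW.flat S.b0 S.ents = (p.map LW.τ) ++ (true, true) ::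
      (List.replicate n ((false, true) : Bool × Bool) ++ (true, true) :: (s.map LW.τ)) := by
    rw [hflat, hW]
    simp [LW.τ2, LW.τ3, List.map_append, List.map_replicate]
  obtain ⟨l1, etop, e, l2, hes, hetop, heps, hbn⟩ := LW.parse hn S.ents S.b0 _ _ hpat
  rw [hes] at hal hm3 hch hu
  have hα := LW.al_extract l1 0 hal hetop
  rw [heps] at hα
  simp only [if_true, sub_zero] at hα
  rw [hbn] at hα
  have hub : |e.u| ≤ e.ub := hu e (by simp)
  have hsg := LW.chain_sg_nonneg hch
  have hm3e : e.ph + e.ub ≤ LW.Bcount U := LW.m3_extract l1 0 hm3 le_rfl hsg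
  have hBU : LW.Bcount U ≤ (U.length : ℤ) := LW.Bcount_le U
  have hnB : (n : ℤ) ≤ LW.Bcount U := by
    rw [abs_le] at hα hub
    omega
  have hle : (n : ℝ) ≤ (U.length : ℝ) := by
    have : (n : ℤ) ≤ (U.length : ℤ) := le_trans hnB hBU
    exact_mod_cast this
  have hnn : (1 : ℝ) ≤ (n : ℝ) := by exact_mod_cast hn
  linarith
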